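/- Let ψ = Σ_{i∈I} c_i ψ_i be a unit vector such that c_j ≠ 0 for some j ∈ ℬ and c_i ≠ 0 for at least one index i ≠ j. Then F_R(ψ) < 1, i.e., ψ is a resourceful pure state. -/

import Mathlib

open Matrix Complex

noncomputable section

/-- Time-evolution unitary `U(t) = exp(-i t H)`. -/
def Uevol {d : ℕ} (H : Matrix (Fin d) (Fin d) ℂ) (t : ℝ) : Matrix (Fin d) (Fin d) ℂ :=
  NormedSpace.exp ((-(Complex.I * (t : ℂ))) • H)

/-- Revival fidelity `F_R(ψ) = |⟨ψ, U(2πT)ψ⟩|`. -/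
def FR {d : ℕ} (H : Matrix (Fin d) (Fin d) ℂ) (T : ℕ) (x : Fin d → ℂ) : ℝ :=
  ‖(star x ⬝ᵥ (Uevol H (2 * Real.pi * T) *ᵥ x))‖

/-- A free pure state: a unit vector with perfect revival. -/
def IsFreeState {d : ℕ} (H : Matrix (Fin d) (Fin d) ℂ) (T : ℕ) (x : Fin d → ℂ) : Prop :=
  star x ⬝ᵥ x = 1 ∧ FR H T x = 1

/-- A free unitary: a unitary matrix mapping every free pure state to a free pure state. -/
def IsFreeUnitary {d : ℕ} (H : Matrix (Fin d) (Fin d) ℂ) (T : ℕ)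
    (V : Matrix (Fin d) (Fin d) ℂ) : Prop :=
  V ∈ Matrix.unitaryGroup (Fin d) ℂ ∧
    ∀ x : Fin d → ℂ, IsFreeState H T x → IsFreeState H T (V *ᵥ x)

attribute [local instance] Matrix.linftyOpNormedAddCommGroup Matrix.linftyOpNormedRing
  Matrix.linftyOpNormedAlgebra

lemma exp_mulVec_eigen {d : ℕ} (M : Matrix (Fin d) (Fin d) ℂ) (v : Fin d → ℂ) (μ : ℂ)
    (h : M *ᵥ v = μ • v) :
    (NormedSpace.exp M) *ᵥ v = Complex.exp μ • v := by
  have hpow : ∀ n : ℕ, (M ^ n) *ᵥ v = (μ ^ n) • v := by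
    intro n
    induction n with
    | zero => simp
    | succ n ih =>
      rw [pow_succ, ← Matrix.mulVec_mulVec, h, Matrix.mulVec_smul, ih, smul_smul, pow_succ,
        mul_comm]
  let L : Matrix (Fin d) (Fin d) ℂ →ₗ[ℂ] (Fin d → ℂ) :=
    { toFun := fun N => N *ᵥ v
      map_add' := fun A B => Matrix.add_mulVec A B v
      map_smul' := fun a A => Matrix.smul_mulVec a A v }
  let Lc := LinearMap.toContinuousLinearMap L
  have h1 : HasSum (fun n : ℕ => (((n.factorial : ℂ))⁻¹ * μ ^ n) • v) ((NormedSpace.exp M) *ᵥ v) := by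
    have hs := (NormedSpace.expSeries_summable' (𝕂 := ℂ) M).hasSum
    have h2 := hs.mapL Lc
    have hfun : (fun n : ℕ => Lc (((n.factorial : ℂ))⁻¹ • M ^ n)) =
        fun n : ℕ => (((n.factorial : ℂ))⁻¹ * μ ^ n) • v := by
      funext n
      rw [_root_.map_smul]
      show ((n.factorial : ℂ))⁻¹ • ((M ^ n) *ᵥ v) = _
      rw [hpow, smul_smul]
    rw [hfun] at h2
    have : Lc (∑' n : ℕ, ((n.factorial : ℂ))⁻¹ • M ^ n) = (NormedSpace.exp M) *ᵥ v := by
      rw [NormedSpace.exp_eq_tsum ℂ]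
      rfl
    rw [← this]
    exact h2
  have h2 : HasSum (fun n : ℕ => (((n.factorial : ℂ))⁻¹ * μ ^ n) • v) (Complex.exp μ • v) := by
    have := (NormedSpace.exp_series_hasSum_exp' (𝕂 := ℂ) μ).smul_const v
    simp only [smul_eq_mul] at this
    rwa [← Complex.exp_eq_exp_ℂ] at this
  exact h1.unique h2


lemma sum_dotProduct' {d : ℕ} (s : Finset (Fin d)) (f : Fin d → Fin d → ℂ) (u : Fin d → ℂ) :
    (∑ l ∈ s, f l) ⬝ᵥ u = ∑ l ∈ s, f l ⬝ᵥ u := by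
  simp only [dotProduct, Finset.sum_apply, Finset.sum_mul]
  rw [Finset.sum_comm]

lemma dotProduct_sum' {d : ℕ} (s : Finset (Fin d)) (u : Fin d → ℂ) (f : Fin d → Fin d → ℂ) :
    u ⬝ᵥ (∑ l ∈ s, f l) = ∑ l ∈ s, u ⬝ᵥ f l := by
  simp only [dotProduct, Finset.sum_apply, Finset.mul_sum]
  rw [Finset.sum_comm]

lemma uevol_eigen {d : ℕ} (H : Matrix (Fin d) (Fin d) ℂ) (ψ : Fin d → ℂ) (E : ℝ) (t : ℝ)
    (h : H *ᵥ ψ = (E : ℂ) • ψ) :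
    Uevol H t *ᵥ ψ = Complex.exp (-(Complex.I * t) * E) • ψ := by
  apply exp_mulVec_eigen
  rw [Matrix.smul_mulVec, h, smul_smul]

lemma dot_expand {d : ℕ} (ψ : Fin d → Fin d → ℂ)
    (horth : ∀ i j : Fin d, star (ψ i) ⬝ᵥ ψ j = if i = j then 1 else 0)
    (a b : Fin d → ℂ) :
    star (∑ k : Fin d, a k • ψ k) ⬝ᵥ (∑ k : Fin d, b k • ψ k)
      = ∑ k : Fin d, (starRingEnd ℂ) (a k) * b k := by
  rw [star_sum, sum_dotProduct']
  refine Finset.sum_congr rfl fun k _ => ?_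
  rw [dotProduct_sum']
  simp only [star_smul, smul_dotProduct, dotProduct_smul,
    horth, smul_eq_mul, mul_ite, mul_one, mul_zero, Complex.star_def]
  simp [Finset.sum_ite_eq, mul_comm]

theorem resourceful_state_no_perfect_revival
    (d : ℕ) (hd : 2 ≤ d)
    (H : Matrix (Fin d) (Fin d) ℂ) (hH : H.IsHermitian)
    (ψ : Fin d → Fin d → ℂ) (E : Fin d → ℝ)
    (horth : ∀ i j : Fin d, star (ψ i) ⬝ᵥ ψ j = if i = j then 1 else 0)
    (heig : ∀ i : Fin d, H *ᵥ ψ i = (E i : ℂ) • ψ i)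
    (T : ℕ) (hT : 0 < T)
    (A B : Finset (Fin d))
    (hdisj : Disjoint A B) (hcover : A ∪ B = Finset.univ)
    (hArat : ∀ i ∈ A, ∃ m : ℤ, E i * (T : ℝ) = (m : ℝ))
    (hBirr : ∀ i ∈ B, Irrational (E i))
    (hBdiff : ∀ i ∈ B, ∀ j ∈ B, i ≠ j → Irrational (E i - E j))
    (hAcard : 1 < A.card) (hBcard : 1 < B.card)
    (c : Fin d → ℂ) (x : Fin d → ℂ) (hxdef : x = ∑ i : Fin d, c i • ψ i)
    (hx : star x ⬝ᵥ x = 1)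
    (j : Fin d) (hj : j ∈ B) (hcj : c j ≠ 0)
    (i : Fin d) (hij : i ≠ j) (hci : c i ≠ 0) :
    FR H T x < 1 := by
  classical
  unfold FR
  set t : ℝ := 2 * Real.pi * T with ht
  set e : Fin d → ℂ := fun k => Complex.exp (-(Complex.I * (t : ℂ)) * (E k : ℂ)) with he
  have habs_e : ∀ k, ‖e k‖ = 1 := by
    intro k
    rw [he]
    simp [Complex.norm_exp]
  have hUx : Uevol H t *ᵥ x = ∑ k : Fin d, (c k * e k) • ψ k := by
    rw [hxdef]
    have hmap := map_sum (Matrix.mulVecLin (Uevol H t)) (fun i => c i • ψ i) Finset.univ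
    simp only [Matrix.mulVecLin_apply] at hmap
    rw [hmap]
    refine Finset.sum_congr rfl fun k _ => ?_
    rw [Matrix.mulVec_smul, uevol_eigen H (ψ k) (E k) t (heig k), smul_smul]
  set z : Fin d → ℂ := fun k => (Complex.normSq (c k) : ℂ) * e k with hz
  have hS : star x ⬝ᵥ (Uevol H t *ᵥ x) = ∑ k : Fin d, z k := by
    rw [hUx, hxdef, dot_expand ψ horth]
    refine Finset.sum_congr rfl fun k _ => ?_
    rw [hz, ← mul_assoc, ← Complex.normSq_eq_conj_mul_self]
  have hx' := hx
  rw [hxdef, dot_expand ψ horth] at hx'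
  have hnorm1 : ∑ k : Fin d, Complex.normSq (c k) = 1 := by
    have h1 : ((∑ k : Fin d, Complex.normSq (c k) : ℝ) : ℂ) = 1 := by
      push_cast
      rw [← hx']
      exact Finset.sum_congr rfl fun k _ => Complex.normSq_eq_conj_mul_self (z := c k)
    exact_mod_cast h1
  have hzabs : ∀ k, ‖z k‖ = Complex.normSq (c k) := by
    intro k
    rw [hz]
    rw [norm_mul, habs_e, mul_one, Complex.norm_real, Real.norm_eq_abs,
      _root_.abs_of_nonneg (Complex.normSq_nonneg _)]
  -- distinct phases
  have heij : e i ≠ e j := by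
    intro hEq
    rw [he] at hEq
    simp only [Complex.exp_eq_exp_iff_exists_int] at hEq
    obtain ⟨n, hn⟩ := hEq
    have him := congrArg Complex.im hn
    simp [Complex.mul_im, Complex.mul_re] at him
    rw [ht] at him
    have h2 : 2 * Real.pi * ((T : ℝ) * (E j - E i)) = 2 * Real.pi * (n : ℝ) := by
      ring_nf at him ⊢
      linarith
    have key : (T : ℝ) * (E j - E i) = (n : ℝ) :=
      mul_left_cancel₀ (by positivity) h2
    have hiAB : i ∈ A ∪ B := hcover ▸ Finset.mem_univ i
    rcases Finset.mem_union.mp hiAB with hiA | hiB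
    · obtain ⟨m, hm⟩ := hArat i hiA
      have hTj : Irrational ((T : ℝ) * E j) := (hBirr j hj).natCast_mul hT.ne'
      have hval : (T : ℝ) * E j = ((n + m : ℤ) : ℝ) := by
        rw [mul_sub] at key
        push_cast
        have hm' : (T : ℝ) * E i = (m : ℝ) := by rw [mul_comm]; exact hm
        linarith
      exact hTj.ne_int (n + m) hval
    · have hIrr : Irrational ((T : ℝ) * (E i - E j)) :=
        (hBdiff i hiB j hj hij).natCast_mul hT.ne'
      have hval : (T : ℝ) * (E i - E j) = ((-n : ℤ) : ℝ) := by
        rw [mul_sub] at key ⊢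
        push_cast
        linarith
      exact hIrr.ne_int (-n) hval
  -- z i, z j nonzero
  have hzne : ∀ k, c k ≠ 0 → z k ≠ 0 := by
    intro k hk
    rw [hz]
    exact mul_ne_zero (Complex.ofReal_ne_zero.mpr (ne_of_gt (Complex.normSq_pos.mpr hk)))
      (by rw [he]; exact Complex.exp_ne_zero _)
  have hnotray : ¬ SameRay ℝ (z i) (z j) := by
    intro hsr
    obtain ⟨a, b, ha, hb, hab⟩ := hsr.exists_pos (hzne i hci) (hzne j hcj)
    have hz' : ∀ k, z k = (Complex.normSq (c k) : ℂ) * e k := fun k => rfl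
    rw [Complex.real_smul, Complex.real_smul, hz', hz'] at hab
    have habs := congrArg norm hab
    simp only [norm_mul, Complex.norm_real, Real.norm_eq_abs, habs_e, mul_one,
      _root_.abs_of_pos ha, _root_.abs_of_pos hb,
      _root_.abs_of_nonneg (Complex.normSq_nonneg _)] at habs
    have hab2 : ((a * Complex.normSq (c i) : ℝ) : ℂ) * e i
        = ((b * Complex.normSq (c j) : ℝ) : ℂ) * e j := by
      push_cast
      rw [← mul_assoc, ← mul_assoc] at hab
      exact hab
    rw [habs] at hab2
    have hne0 : ((b * Complex.normSq (c j) : ℝ) : ℂ) ≠ 0 :=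
      Complex.ofReal_ne_zero.mpr (ne_of_gt (mul_pos hb (Complex.normSq_pos.mpr hcj)))
    exact heij (mul_left_cancel₀ hne0 hab2)
  rw [hS]
  have hjmem : j ∈ Finset.univ.erase i := Finset.mem_erase.mpr ⟨Ne.symm hij, Finset.mem_univ j⟩
  set s' := (Finset.univ.erase i).erase j with hs'
  have hsplit : ∑ k : Fin d, z k = z i + z j + ∑ k ∈ s', z k := by
    rw [add_assoc, Finset.add_sum_erase _ z hjmem, Finset.add_sum_erase _ z (Finset.mem_univ i)]
  have hlt : ‖z i + z j‖ < ‖z i‖ + ‖z j‖ := by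
    simpa using norm_add_lt_of_not_sameRay hnotray
  have h1 : ‖∑ k : Fin d, z k‖
      < ‖z i‖ + ‖z j‖ + ∑ k ∈ s', ‖z k‖ := by
    rw [hsplit]
    calc ‖z i + z j + ∑ k ∈ s', z k‖
        ≤ ‖z i + z j‖ + ‖∑ k ∈ s', z k‖ := by
          simpa using norm_add_le (z i + z j) (∑ k ∈ s', z k)
      _ ≤ ‖z i + z j‖ + ∑ k ∈ s', ‖z k‖ := by
          gcongr
          simpa using norm_sum_le s' z
      _ < ‖z i‖ + ‖z j‖ + ∑ k ∈ s', ‖z k‖ := by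
          exact add_lt_add_left hlt _
  have h2 : ‖z i‖ + ‖z j‖ + ∑ k ∈ s', ‖z k‖
      = ∑ k : Fin d, ‖z k‖ := by
    rw [add_assoc, Finset.add_sum_erase _ (fun k => ‖z k‖) hjmem,
      Finset.add_sum_erase _ (fun k => ‖z k‖) (Finset.mem_univ i)]
  have h3 : ∑ k : Fin d, ‖z k‖ = 1 := by
    rw [← hnorm1]
    exact Finset.sum_congr rfl fun k _ => hzabs k
  rw [h2, h3] at h1
  exact h1
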